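/- In the standing setup, assume that the adjoint map τ₁^l : V → W* of τ₁ is injective and that R is the Nichols algebra of V. Then R, regarded as a left ℬ-module via ρ (the Verma module), is a simple ℬ-module. -/
import Mathlib


open TensorProduct BigOperators

noncomputable section

namespace QB

variable (k : Type) [Field k]

/-- Data of a Hopf algebra structure (with bijective antipode, whose inverse is the
pode) on a `k`-algebra `H`. -/
structure HopfData (H : Type) [Ring H] [Algebra k H] where
  comul : H →ₗ[k] H ⊗[k] H
  counit : H →ₗ[k] k
  antipode : H →ₗ[k] H
  pode : H →ₗ[k] H
  comul_one : comul 1 = 1 ⊗ₜ[k] 1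
  comul_mul : ∀ a b : H, comul (a * b) = comul a * comul b
  counit_one : counit 1 = 1
  counit_mul : ∀ a b : H, counit (a * b) = counit a * counit b
  coassoc : ∀ a : H,
    (TensorProduct.assoc k H H H) ((comul.rTensor H) (comul a)) = (comul.lTensor H) (comul a)
  counit_comul : ∀ a : H, (TensorProduct.lid k H) ((counit.rTensor H) (comul a)) = a
  comul_counit : ∀ a : H, (TensorProduct.rid k H) ((counit.lTensor H) (comul a)) = a
  antipode_conv : ∀ a : H, (LinearMap.mul' k H) ((antipode.rTensor H) (comul a)) = counit a • 1
  conv_antipode : ∀ a : H, (LinearMap.mul' k H) ((antipode.lTensor H) (comul a)) = counit a • 1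
  pode_antipode : ∀ a : H, pode (antipode a) = a
  antipode_pode : ∀ a : H, antipode (pode a) = a

/-- A (left-left) Yetter-Drinfeld module over the Hopf algebra `(H, D)`. -/
structure YDMod (H : Type) [Ring H] [Algebra k H] (D : HopfData k H)
    (V : Type) [AddCommGroup V] [Module k V] where
  act : H →ₗ[k] V →ₗ[k] V
  act_one : ∀ v, act 1 v = v
  act_mul : ∀ (a b : H) (v : V), act (a * b) v = act a (act b v)
  coact : V →ₗ[k] H ⊗[k] V
  coact_counit : ∀ v, (TensorProduct.lid k V) ((D.counit.rTensor V) (coact v)) = v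
  coact_coassoc : ∀ v,
    (TensorProduct.assoc k H H V) ((D.comul.rTensor V) (coact v)) = (coact.lTensor H) (coact v)
  yd_compat : ∀ (a : H) (v : V) (p q : ℕ) (a1 a2 a3 : Fin p → H)
      (vJ : Fin q → H) (vV : Fin q → V),
    (D.comul.rTensor H) (D.comul a) = ∑ i, (a1 i ⊗ₜ[k] a2 i) ⊗ₜ[k] a3 i →
    coact v = ∑ j, vJ j ⊗ₜ[k] vV j →
    coact (act a v) = ∑ i, ∑ j, (a1 i * vJ j * D.antipode (a3 i)) ⊗ₜ[k] act (a2 i) (vV j)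

end QB

namespace QB

variable (k : Type) [Field k]

/-- A braided graded Hopf algebra `R` (given as an ordinary `k`-algebra together with a
braided coproduct) in the category of Yetter-Drinfeld modules over `(J, D)`, with
`R(0) = k`, together with its antipode. -/
structure BGH (J : Type) [Ring J] [Algebra k J] (D : HopfData k J)
    (R : Type) [Ring R] [Algebra k R] extends YDMod k J D R where
  grade : ℕ → Submodule k R
  internal : DirectSum.IsInternal grade
  one_grade : (1 : R) ∈ grade 0
  mul_grade : ∀ {m n : ℕ} {r s : R}, r ∈ grade m → s ∈ grade n → r * s ∈ grade (m + n)
  grade0 : grade 0 = Submodule.span k {(1 : R)}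
  comul : R →ₗ[k] R ⊗[k] R
  counit : R →ₗ[k] k
  comul_one : comul 1 = 1 ⊗ₜ[k] 1
  counit_one : counit 1 = 1
  counit_mul : ∀ r s : R, counit (r * s) = counit r * counit s
  coassoc : ∀ r : R,
    (TensorProduct.assoc k R R R) ((comul.rTensor R) (comul r)) = (comul.lTensor R) (comul r)
  counit_comul : ∀ r : R, (TensorProduct.lid k R) ((counit.rTensor R) (comul r)) = r
  comul_counit : ∀ r : R, (TensorProduct.rid k R) ((counit.lTensor R) (comul r)) = r
  /-- braided multiplicativity of the coproduct -/
  comul_mul : ∀ (r s : R) (p q u : ℕ) (r1 r2 : Fin p → R) (rJ : Fin p → Fin q → J)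
      (rV : Fin p → Fin q → R) (s1 s2 : Fin u → R),
    comul r = ∑ i, r1 i ⊗ₜ[k] r2 i →
    (∀ i, coact (r2 i) = ∑ j, rJ i j ⊗ₜ[k] rV i j) →
    comul s = ∑ t, s1 t ⊗ₜ[k] s2 t →
    comul (r * s) = ∑ i, ∑ j, ∑ t, (r1 i * act (rJ i j) (s1 t)) ⊗ₜ[k] (rV i j * s2 t)
  /-- `R` is a `J`-module algebra -/
  act_mul_alg : ∀ (a : J) (r s : R) (p : ℕ) (a1 a2 : Fin p → J),
    D.comul a = ∑ i, a1 i ⊗ₜ[k] a2 i →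
    act a (r * s) = ∑ i, act (a1 i) r * act (a2 i) s
  act_one_alg : ∀ a : J, act a (1 : R) = D.counit a • (1 : R)
  /-- `R` is a `J`-comodule algebra -/
  coact_mul : ∀ (r s : R) (p q : ℕ) (rJ : Fin p → J) (rV : Fin p → R)
      (sJ : Fin q → J) (sV : Fin q → R),
    coact r = ∑ i, rJ i ⊗ₜ[k] rV i → coact s = ∑ j, sJ j ⊗ₜ[k] sV j →
    coact (r * s) = ∑ i, ∑ j, (rJ i * sJ j) ⊗ₜ[k] (rV i * sV j)
  coact_one : coact 1 = 1 ⊗ₜ[k] 1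
  /-- the coproduct is `J`-linear -/
  comul_act : ∀ (a : J) (r : R) (p q : ℕ) (a1 a2 : Fin p → J) (r1 r2 : Fin q → R),
    D.comul a = ∑ i, a1 i ⊗ₜ[k] a2 i → comul r = ∑ j, r1 j ⊗ₜ[k] r2 j →
    comul (act a r) = ∑ i, ∑ j, act (a1 i) (r1 j) ⊗ₜ[k] act (a2 i) (r2 j)
  counit_act : ∀ (a : J) (r : R), counit (act a r) = D.counit a * counit r
  /-- the coproduct is `J`-colinear -/
  comul_coact : ∀ (r : R) (p q u : ℕ) (r1 r2 : Fin p → R)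
      (aJ : Fin p → Fin q → J) (aV : Fin p → Fin q → R)
      (bJ : Fin p → Fin u → J) (bV : Fin p → Fin u → R)
      (w : ℕ) (rJ : Fin w → J) (rV : Fin w → R),
    comul r = ∑ i, r1 i ⊗ₜ[k] r2 i →
    (∀ i, coact (r1 i) = ∑ j, aJ i j ⊗ₜ[k] aV i j) →
    (∀ i, coact (r2 i) = ∑ t, bJ i t ⊗ₜ[k] bV i t) →
    coact r = ∑ j, rJ j ⊗ₜ[k] rV j →
    ∑ i, ∑ j, ∑ t, (aJ i j * bJ i t) ⊗ₜ[k] (aV i j ⊗ₜ[k] bV i t)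
      = ∑ j, rJ j ⊗ₜ[k] comul (rV j)
  /-- the counit is `J`-colinear -/
  counit_coact : ∀ (r : R) (w : ℕ) (rJ : Fin w → J) (rV : Fin w → R),
    coact r = ∑ j, rJ j ⊗ₜ[k] rV j → ∑ j, counit (rV j) • rJ j = counit r • (1 : J)
  /-- the action preserves the grading -/
  act_grade : ∀ (a : J) {n : ℕ} {r : R}, r ∈ grade n → act a r ∈ grade n
  /-- the coaction preserves the grading -/
  coact_grade : ∀ {n : ℕ} (r : R), r ∈ grade n → ∃ (p : ℕ) (rJ : Fin p → J) (rV : Fin p → R),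
    (∀ i, rV i ∈ grade n) ∧ coact r = ∑ i, rJ i ⊗ₜ[k] rV i
  /-- the coproduct preserves the grading -/
  comul_grade : ∀ {n : ℕ} (r : R), r ∈ grade n → ∃ (p : ℕ) (d e : Fin p → ℕ) (x y : Fin p → R),
    (∀ i, d i + e i = n ∧ x i ∈ grade (d i) ∧ y i ∈ grade (e i)) ∧
      comul r = ∑ i, x i ⊗ₜ[k] y i
  /-- the (braided) antipode of `R` -/
  antipodeR : R →ₗ[k] R
  antipodeR_conv : ∀ (r : R) (p : ℕ) (r1 r2 : Fin p → R), comul r = ∑ i, r1 i ⊗ₜ[k] r2 i →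
    ∑ i, antipodeR (r1 i) * r2 i = counit r • 1
  conv_antipodeR : ∀ (r : R) (p : ℕ) (r1 r2 : Fin p → R), comul r = ∑ i, r1 i ⊗ₜ[k] r2 i →
    ∑ i, r1 i * antipodeR (r2 i) = counit r • 1

variable {J : Type} [Ring J] [Algebra k J] {R : Type} [Ring R] [Algebra k R]

/-- `R` is a pre-Nichols algebra of `V = R(1)` iff it is generated by its degree-one part. -/
def BGH.IsPreNichols {D : HopfData k J} (B : BGH k J D R) : Prop :=
  Algebra.adjoin k (B.grade 1 : Set R) = ⊤

/-- The set of primitive elements of the braided Hopf algebra `R`. -/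
def BGH.primitives {D : HopfData k J} (B : BGH k J D R) : Set R :=
  {r : R | B.comul r = r ⊗ₜ[k] 1 + 1 ⊗ₜ[k] r}

/-- `R` is the Nichols algebra of `V = R(1)` iff it is pre-Nichols and its degree-one
part coincides with the space of primitives. -/
def BGH.IsNichols {D : HopfData k J} (B : BGH k J D R) : Prop :=
  B.IsPreNichols k ∧ (B.grade 1 : Set R) = B.primitives k

end QB

namespace QB

variable (k : Type) [Field k]
variable {J : Type} [Ring J] [Algebra k J] {R : Type} [Ring R] [Algebra k R]

/-- The bosonization `𝒜 = R ⋊ J` : the (uniquely determined) ordinary Hopf algebra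
structure on the vector space `R ⊗ J`, given as data subject to the defining formulas
for the product and coproduct, together with its antipode and pode. -/
structure Boson (D : HopfData k J) (B : BGH k J D R) where
  Amul : (R ⊗[k] J) →ₗ[k] (R ⊗[k] J) →ₗ[k] (R ⊗[k] J)
  Amul_assoc : ∀ x y z, Amul (Amul x y) z = Amul x (Amul y z)
  Amul_one : ∀ x, Amul x ((1 : R) ⊗ₜ[k] (1 : J)) = x
  one_Amul : ∀ x, Amul ((1 : R) ⊗ₜ[k] (1 : J)) x = x
  Amul_def : ∀ (r s : R) (a b : J) (p : ℕ) (a1 a2 : Fin p → J),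
    D.comul a = ∑ i, a1 i ⊗ₜ[k] a2 i →
    Amul (r ⊗ₜ[k] a) (s ⊗ₜ[k] b) = ∑ i, (r * B.act (a1 i) s) ⊗ₜ[k] (a2 i * b)
  Acomul : (R ⊗[k] J) →ₗ[k] (R ⊗[k] J) ⊗[k] (R ⊗[k] J)
  Acomul_def : ∀ (r : R) (a : J) (p q u : ℕ) (r1 r2 : Fin p → R)
      (rJ : Fin p → Fin q → J) (rV : Fin p → Fin q → R) (aa1 aa2 : Fin u → J),
    B.comul r = ∑ i, r1 i ⊗ₜ[k] r2 i →
    (∀ i, B.coact (r2 i) = ∑ j, rJ i j ⊗ₜ[k] rV i j) →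
    D.comul a = ∑ t, aa1 t ⊗ₜ[k] aa2 t →
    Acomul (r ⊗ₜ[k] a)
      = ∑ i, ∑ j, ∑ t, (r1 i ⊗ₜ[k] (rJ i j * aa1 t)) ⊗ₜ[k] (rV i j ⊗ₜ[k] aa2 t)
  Acounit : (R ⊗[k] J) →ₗ[k] k
  Acounit_def : ∀ (r : R) (a : J), Acounit (r ⊗ₜ[k] a) = B.counit r * D.counit a
  Acoassoc : ∀ x, (TensorProduct.assoc k (R ⊗[k] J) (R ⊗[k] J) (R ⊗[k] J))
      ((Acomul.rTensor (R ⊗[k] J)) (Acomul x)) = (Acomul.lTensor (R ⊗[k] J)) (Acomul x)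
  Acounit_comul : ∀ x, (TensorProduct.lid k (R ⊗[k] J)) ((Acounit.rTensor (R ⊗[k] J)) (Acomul x)) = x
  Acomul_counit : ∀ x, (TensorProduct.rid k (R ⊗[k] J)) ((Acounit.lTensor (R ⊗[k] J)) (Acomul x)) = x
  Santipode : (R ⊗[k] J) →ₗ[k] (R ⊗[k] J)
  Spode : (R ⊗[k] J) →ₗ[k] (R ⊗[k] J)
  antipode_conv : ∀ (x : R ⊗[k] J) (p : ℕ) (x1 x2 : Fin p → R ⊗[k] J),
    Acomul x = ∑ i, x1 i ⊗ₜ[k] x2 i →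
    ∑ i, Amul (Santipode (x1 i)) (x2 i) = Acounit x • ((1 : R) ⊗ₜ[k] (1 : J))
  conv_antipode : ∀ (x : R ⊗[k] J) (p : ℕ) (x1 x2 : Fin p → R ⊗[k] J),
    Acomul x = ∑ i, x1 i ⊗ₜ[k] x2 i →
    ∑ i, Amul (x1 i) (Santipode (x2 i)) = Acounit x • ((1 : R) ⊗ₜ[k] (1 : J))
  pode_antipode : ∀ x, Spode (Santipode x) = x
  antipode_pode : ∀ x, Santipode (Spode x) = x

variable {K S : Type} [Ring K] [Algebra k K] [Ring S] [Algebra k S]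

/-- the embedding `R → R ⊗ J`, `r ↦ r ⊗ 1` -/
def incl₁ : R →ₗ[k] R ⊗[k] J := (TensorProduct.mk k R J).flip 1

/-- the embedding `J → R ⊗ J`, `a ↦ 1 ⊗ a` -/
def incl₂ : J →ₗ[k] R ⊗[k] J := TensorProduct.mk k R J 1

/-- the projection `π : 𝒜 → J` induced by `ε ⊗ id` -/
def proj₂ (B : BGH k J D R) : (R ⊗[k] J) →ₗ[k] J :=
  (TensorProduct.lid k J).toLinearMap ∘ₗ (B.counit.rTensor J)

end QB

namespace QB

variable (k : Type) [Field k]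
variable {J : Type} [Ring J] [Algebra k J] {R : Type} [Ring R] [Algebra k R]
variable {K S : Type} [Ring K] [Algebra k K] [Ring S] [Algebra k S]

/-- The standing setup of the paper: Hopf algebras `J`, `K` with bijective antipode,
pre-Nichols algebras `R`, `S` of `V = R(1)`, `W = S(1)` in the Yetter-Drinfeld
categories over `J`, `K`, their bosonizations `𝒜 = R ⋊ J`, `ℋ = S ⋊ K`, a skew pairing
`τ₀ : J ⊗ K → k` and the (unique) skew pairing `τ : 𝒜 ⊗ ℋ → k` extending `τ₀` with
`τ(J, W) = 0 = τ(V, K)`. -/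
structure Setup (J K R S : Type) [Ring J] [Algebra k J] [Ring K] [Algebra k K]
    [Ring R] [Algebra k R] [Ring S] [Algebra k S] where
  DJ : HopfData k J
  DK : HopfData k K
  RB : BGH k J DJ R
  SB : BGH k K DK S
  RB_pre : RB.IsPreNichols k
  SB_pre : SB.IsPreNichols k
  A : Boson k DJ RB
  H : Boson k DK SB
  τ₀ : J →ₗ[k] K →ₗ[k] k
  τ₀_mul_left : ∀ (a b : J) (x : K) (p : ℕ) (x1 x2 : Fin p → K),
    DK.comul x = ∑ i, x1 i ⊗ₜ[k] x2 i →
    τ₀ (a * b) x = ∑ i, τ₀ a (x1 i) * τ₀ b (x2 i)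
  τ₀_mul_right : ∀ (a : J) (x y : K) (p : ℕ) (a1 a2 : Fin p → J),
    DJ.comul a = ∑ i, a1 i ⊗ₜ[k] a2 i →
    τ₀ a (x * y) = ∑ i, τ₀ (a1 i) y * τ₀ (a2 i) x
  τ₀_one_left : ∀ x : K, τ₀ 1 x = DK.counit x
  τ₀_one_right : ∀ a : J, τ₀ a 1 = DJ.counit a
  τ : (R ⊗[k] J) →ₗ[k] (S ⊗[k] K) →ₗ[k] k
  τ_mul_left : ∀ (x y : R ⊗[k] J) (z : S ⊗[k] K) (p : ℕ) (z1 z2 : Fin p → S ⊗[k] K),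
    H.Acomul z = ∑ i, z1 i ⊗ₜ[k] z2 i →
    τ (A.Amul x y) z = ∑ i, τ x (z1 i) * τ y (z2 i)
  τ_mul_right : ∀ (x : R ⊗[k] J) (y z : S ⊗[k] K) (p : ℕ) (x1 x2 : Fin p → R ⊗[k] J),
    A.Acomul x = ∑ i, x1 i ⊗ₜ[k] x2 i →
    τ x (H.Amul y z) = ∑ i, τ (x1 i) z * τ (x2 i) y
  τ_one_left : ∀ z : S ⊗[k] K, τ ((1 : R) ⊗ₜ[k] (1 : J)) z = H.Acounit z
  τ_one_right : ∀ x : R ⊗[k] J, τ x ((1 : S) ⊗ₜ[k] (1 : K)) = A.Acounit x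
  τ_ext : ∀ (a : J) (x : K), τ ((1 : R) ⊗ₜ[k] a) ((1 : S) ⊗ₜ[k] x) = τ₀ a x
  τ_JW : ∀ (a : J) (w : S), w ∈ SB.grade 1 → τ ((1 : R) ⊗ₜ[k] a) (w ⊗ₜ[k] (1 : K)) = 0
  τ_VK : ∀ (v : R) (x : K), v ∈ RB.grade 1 → τ (v ⊗ₜ[k] (1 : J)) ((1 : S) ⊗ₜ[k] x) = 0

variable {k}

/-- The restriction `τ_{RS} : R ⊗ S → k` of `τ`, as a bilinear form. -/
def Setup.tauRS (St : Setup k J K R S) : R →ₗ[k] S →ₗ[k] k :=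
  LinearMap.compl₂ (St.τ ∘ₗ incl₁ k) (incl₁ k)

/-- The action `s ▷ r = τ(r₍₁₎, s) r₍₂₎` of `S` on `R` (formula (3.4)). -/
def Setup.sAct (St : Setup k J K R S) (s : S) : R →ₗ[k] R :=
  (TensorProduct.lid k R).toLinearMap ∘ₗ
    (LinearMap.rTensor R (St.tauRS.flip s)) ∘ₗ St.RB.comul

/-- The generalized `q`-boson algebra `ℬ`: the (uniquely determined) deformed algebra
structure on `R ⊗ S`, given as data subject to the defining relations (3.2), (3.3). -/
structure QBosonAlg (St : Setup k J K R S) where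
  Bmul : (R ⊗[k] S) →ₗ[k] (R ⊗[k] S) →ₗ[k] (R ⊗[k] S)
  Bmul_assoc : ∀ x y z, Bmul (Bmul x y) z = Bmul x (Bmul y z)
  Bmul_one : ∀ x, Bmul x ((1 : R) ⊗ₜ[k] (1 : S)) = x
  one_Bmul : ∀ x, Bmul ((1 : R) ⊗ₜ[k] (1 : S)) x = x
  mul_rr : ∀ r r' : R, Bmul (r ⊗ₜ[k] (1 : S)) (r' ⊗ₜ[k] (1 : S)) = (r * r') ⊗ₜ[k] (1 : S)
  mul_ss : ∀ s s' : S, Bmul ((1 : R) ⊗ₜ[k] s) ((1 : R) ⊗ₜ[k] s') = (1 : R) ⊗ₜ[k] (s * s')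
  mul_rs : ∀ (r : R) (s : S), Bmul (r ⊗ₜ[k] (1 : S)) ((1 : R) ⊗ₜ[k] s) = r ⊗ₜ[k] s
  mul_wv : ∀ (v : R) (w : S), v ∈ St.RB.grade 1 → w ∈ St.SB.grade 1 →
    ∀ (p q : ℕ) (vJ : Fin p → J) (vV : Fin p → R) (wK : Fin q → K) (wW : Fin q → S),
    St.RB.coact v = ∑ i, vJ i ⊗ₜ[k] vV i →
    St.SB.coact w = ∑ j, wK j ⊗ₜ[k] wW j →
    Bmul ((1 : R) ⊗ₜ[k] w) (v ⊗ₜ[k] (1 : S))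
      = (∑ i, ∑ j, St.τ₀ (vJ i) (wK j) • (vV i ⊗ₜ[k] wW j))
        + St.τ (v ⊗ₜ[k] (1 : J)) (w ⊗ₜ[k] (1 : K)) • ((1 : R) ⊗ₜ[k] (1 : S))

/-- Non-degeneracy of a bilinear form. -/
def Nondeg {M N : Type} [AddCommGroup M] [Module k M] [AddCommGroup N] [Module k N]
    (φ : M →ₗ[k] N →ₗ[k] k) : Prop :=
  (∀ m : M, (∀ n : N, φ m n = 0) → m = 0) ∧ (∀ n : N, (∀ m : M, φ m n = 0) → n = 0)

end QB

namespace QB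

section AuxHelpers

variable {k : Type} [Field k]

theorem aux_exists_fin_rep {M N : Type} [AddCommGroup M] [Module k M] [AddCommGroup N]
    [Module k N] (z : M ⊗[k] N) :
    ∃ (p : ℕ) (f : Fin p → M) (g : Fin p → N), z = ∑ i, f i ⊗ₜ[k] g i := by
  obtain ⟨s, hs⟩ := TensorProduct.exists_finset z
  refine ⟨s.card, fun i => (s.equivFin.symm i).1.1, fun i => (s.equivFin.symm i).1.2, ?_⟩
  rw [hs, ← Finset.sum_coe_sort s (fun i => i.1 ⊗ₜ[k] i.2)]
  exact (Fintype.sum_equiv s.equivFin.symm _ _ (fun i => rfl)).symm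

theorem aux_sum_pad {α : Type} [AddCommMonoid α] {m q : ℕ} (h : m ≤ q) (F : Fin m → α) :
    (∑ j : Fin q, if hj : (j : ℕ) < m then F ⟨j, hj⟩ else 0) = ∑ j, F j := by
  have h1 := Fin.sum_univ_eq_sum_range (fun n => if hj : n < m then F ⟨n, hj⟩ else 0) q
  have h2 := Fin.sum_univ_eq_sum_range (fun n => if hj : n < m then F ⟨n, hj⟩ else 0) m
  have h3 : (∑ j : Fin m, if hj : ((j : ℕ)) < m then F ⟨j, hj⟩ else 0) = ∑ j, F j :=
    Finset.sum_congr rfl fun j _ => dif_pos j.isLt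
  rw [h1, ← Finset.sum_subset (Finset.range_subset_range.2 h)
    (fun x _ hx => dif_neg (by simpa using hx)), ← h2, h3]

theorem aux_exists_uniform_rep {M N : Type} [AddCommGroup M] [Module k M] [AddCommGroup N]
    [Module k N] {p : ℕ} (P : Fin p → M ⊗[k] N) (G : Fin p → Submodule k N)
    (h : ∀ i, ∃ (q : ℕ) (f : Fin q → M) (g : Fin q → N),
      (∀ j, g j ∈ G i) ∧ P i = ∑ j, f j ⊗ₜ[k] g j) :
    ∃ (q : ℕ) (f : Fin p → Fin q → M) (g : Fin p → Fin q → N),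
      (∀ i j, g i j ∈ G i) ∧ ∀ i, P i = ∑ j, f i j ⊗ₜ[k] g i j := by
  choose q f g hg hP using h
  refine ⟨Finset.univ.sup q, fun i j => if hj : (j : ℕ) < q i then f i ⟨j, hj⟩ else 0,
    fun i j => if hj : (j : ℕ) < q i then g i ⟨j, hj⟩ else 0, ?_, ?_⟩
  · intro i j; dsimp only; split
    · exact hg i _
    · exact (G i).zero_mem
  · intro i
    rw [hP i, ← aux_sum_pad (Finset.le_sup (Finset.mem_univ i)) (fun j => f i j ⊗ₜ[k] g i j)]
    refine Finset.sum_congr rfl fun j _ => ?_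
    by_cases hj : (j : ℕ) < q i
    · simp [hj]
    · simp [hj]

def fl2 {β : Type} (p q : ℕ) (f : Fin p → Fin q → β) : Fin (p * q) → β :=
  fun l => f (finProdFinEquiv.symm l).1 (finProdFinEquiv.symm l).2

theorem sum_fl2 {β : Type} [AddCommMonoid β] (p q : ℕ) (f : Fin p → Fin q → β) :
    ∑ l, fl2 p q f l = ∑ i, ∑ j, f i j := by
  calc ∑ l, fl2 p q f l = ∑ x : Fin p × Fin q, f x.1 x.2 :=
        Equiv.sum_comp finProdFinEquiv.symm (fun x => f x.1 x.2)
    _ = ∑ i, ∑ j, f i j := Fintype.sum_prod_type' f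


theorem aux_tensor_zero_of_contractions {M N S : Type} [AddCommGroup M] [Module k M]
    [AddCommGroup N] [Module k N] [AddCommGroup S] [Module k S]
    (f : M →ₗ[k] S →ₗ[k] k) (hf : ∀ m, (∀ s, f m s = 0) → m = 0)
    (z : M ⊗[k] N)
    (hz : ∀ s, TensorProduct.lid k N (LinearMap.rTensor N (f.flip s) z) = 0) :
    z = 0 := by
  classical
  obtain ⟨p, m, n, rfl⟩ := aux_exists_fin_rep z
  let b := Module.Basis.ofVectorSpace k N
  set F : Finset (Module.Basis.ofVectorSpaceIndex k N) :=
    Finset.univ.biUnion (fun i : Fin p => (b.repr (n i)).support) with hF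
  have hnrep : ∀ i, n i = ∑ j ∈ F, (b.repr (n i)) j • b j := by
    intro i
    have hrepr := b.linearCombination_repr (n i)
    rw [Finsupp.linearCombination_apply, Finsupp.sum] at hrepr
    refine hrepr.symm.trans ?_
    exact Finset.sum_subset (fun j hj => Finset.mem_biUnion.2 ⟨i, Finset.mem_univ i, hj⟩)
      (fun j _ hj => by rw [Finsupp.notMem_support_iff.1 hj, zero_smul])
  have hzrep : (∑ i, m i ⊗ₜ[k] n i)
      = ∑ j ∈ F, (∑ i, (b.repr (n i)) j • m i) ⊗ₜ[k] b j := by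
    refine Eq.symm ?_
    calc ∑ j ∈ F, (∑ i, (b.repr (n i)) j • m i) ⊗ₜ[k] b j
        = ∑ j ∈ F, ∑ i, ((b.repr (n i)) j • m i) ⊗ₜ[k] b j := by
          exact Finset.sum_congr rfl fun j _ => TensorProduct.sum_tmul _ _ _
      _ = ∑ i, ∑ j ∈ F, m i ⊗ₜ[k] ((b.repr (n i)) j • b j) := by
          rw [Finset.sum_comm]
          exact Finset.sum_congr rfl fun i _ => Finset.sum_congr rfl fun j _ =>
            (smul_tmul _ _ _)
      _ = ∑ i, m i ⊗ₜ[k] n i := by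
          refine Finset.sum_congr rfl fun i _ => ?_
          rw [← tmul_sum, ← hnrep i]
  have hu : ∀ j ∈ F, (∑ i, (b.repr (n i)) j • m i) = 0 := by
    intro j hj
    refine hf _ fun s => ?_
    have h1 := hz s
    rw [hzrep, map_sum, map_sum] at h1
    simp only [LinearMap.rTensor_tmul, lid_tmul] at h1
    have h2 := linearIndependent_iff'.1 b.linearIndependent F
      (fun j => (f.flip s) (∑ i, (b.repr (n i)) j • m i)) h1 j hj
    simpa using h2
  rw [hzrep]
  refine Finset.sum_eq_zero fun j hj => ?_
  rw [hu j hj, zero_tmul]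


theorem lid_rTensor_sum {k : Type} [Field k] {M N : Type} [AddCommGroup M] [Module k M]
    [AddCommGroup N] [Module k N]
    (e : M →ₗ[k] k) {p : ℕ} (f : Fin p → M) (g : Fin p → N) :
    (TensorProduct.lid k N) ((e.rTensor N) (∑ i, f i ⊗ₜ[k] g i)) = ∑ i, e (f i) • g i := by
  rw [map_sum, map_sum]
  exact Finset.sum_congr rfl fun i _ => by rw [LinearMap.rTensor_tmul, lid_tmul]

theorem rid_lTensor_sum {k : Type} [Field k] {M N : Type} [AddCommGroup M] [Module k M]
    [AddCommGroup N] [Module k N]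
    (e : M →ₗ[k] k) {p : ℕ} (f : Fin p → N) (g : Fin p → M) :
    (TensorProduct.rid k N) ((e.lTensor N) (∑ i, f i ⊗ₜ[k] g i)) = ∑ i, e (g i) • f i := by
  rw [map_sum, map_sum]
  exact Finset.sum_congr rfl fun i _ => by rw [LinearMap.lTensor_tmul, rid_tmul]

end AuxHelpers

section GradedInfra

variable {k : Type} [Field k]
variable {J : Type} [Ring J] [Algebra k J] {R : Type} [Ring R] [Algebra k R]
variable {D : HopfData k J}

namespace BGH

/-- The decomposition isomorphism coming from the internal grading. -/
noncomputable def decomp (B : BGH k J D R) : DirectSum ℕ (fun n => B.grade n) ≃ₗ[k] R :=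
  LinearEquiv.ofBijective (DirectSum.coeLinearMap B.grade) B.internal

/-- Projection onto the `n`-th graded component. -/
noncomputable def proj (B : BGH k J D R) (n : ℕ) : R →ₗ[k] R :=
  (B.grade n).subtype ∘ₗ (DirectSum.component k ℕ (fun m => B.grade m) n) ∘ₗ
    B.decomp.symm.toLinearMap

theorem proj_apply (B : BGH k J D R) (n : ℕ) (x : R) :
    B.proj n x = ((B.decomp.symm x) n : R) := rfl

theorem proj_mem (B : BGH k J D R) (n : ℕ) (x : R) : B.proj n x ∈ B.grade n :=
  ((B.decomp.symm x) n).2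

theorem proj_same (B : BGH k J D R) {n : ℕ} {x : R} (hx : x ∈ B.grade n) :
    B.proj n x = x := by
  rw [proj_apply]
  exact congrArg Subtype.val (B.internal.ofBijective_coeLinearMap_of_mem (i := n) hx)

theorem proj_ne (B : BGH k J D R) {m n : ℕ} {x : R} (hx : x ∈ B.grade m) (hmn : m ≠ n) :
    B.proj n x = 0 := by
  rw [proj_apply]
  exact congrArg Subtype.val (B.internal.ofBijective_coeLinearMap_of_mem_ne hmn hx)

theorem sum_proj_support (B : BGH k J D R) (x : R) :
    ∃ F : Finset ℕ, (x = ∑ m ∈ F, B.proj m x) ∧ (∀ m ∈ F, B.proj m x ≠ 0) := by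
  classical
  refine ⟨(B.decomp.symm x).support, ?_, ?_⟩
  · have h := DirectSum.sum_support_of (β := fun m => B.grade m) (B.decomp.symm x)
    have h2 : B.decomp.toLinearMap (∑ m ∈ (B.decomp.symm x).support,
        DirectSum.of (fun m => B.grade m) m ((B.decomp.symm x) m)) = x := by
      rw [h]
      exact B.decomp.apply_symm_apply x
    rw [map_sum] at h2
    refine h2.symm.trans (Finset.sum_congr rfl fun m _ => ?_)
    rw [proj_apply]
    exact DirectSum.coeLinearMap_of _ _ _
  · intro m hm
    rw [proj_apply]
    intro hc
    exact (DFinsupp.mem_support_iff.1 hm) (ZeroMemClass.coe_eq_zero.1 hc)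

theorem counit_comul_rep (B : BGH k J D R) {r : R} {p : ℕ} {f g : Fin p → R}
    (h : B.comul r = ∑ i, f i ⊗ₜ[k] g i) : ∑ i, B.counit (f i) • g i = r := by
  have h2 := B.counit_comul r
  rw [h, lid_rTensor_sum] at h2
  exact h2

theorem comul_counit_rep (B : BGH k J D R) {r : R} {p : ℕ} {f g : Fin p → R}
    (h : B.comul r = ∑ i, f i ⊗ₜ[k] g i) : ∑ i, B.counit (g i) • f i = r := by
  have h2 := B.comul_counit r
  rw [h, rid_lTensor_sum] at h2
  exact h2

theorem counit_grade (B : BGH k J D R) :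
    ∀ n : ℕ, n ≠ 0 → ∀ r ∈ B.grade n, B.counit r = 0 := by
  intro n
  induction n using Nat.strong_induction_on with
  | _ n IH =>
  intro hn r hr
  obtain ⟨p, d, e, x, y, hc, hD⟩ := B.comul_grade r hr
  have hcc : ∑ i, B.counit (x i) • y i = r := B.counit_comul_rep hD
  have hc2 : ∑ i, B.counit (y i) • x i = r := B.comul_counit_rep hD
  have hproj0 : B.proj 0 r = 0 := B.proj_ne hr hn
  have hA : ∑ i ∈ Finset.univ.filter (fun i => e i = 0),
      B.counit (x i) * B.counit (y i) = 0 := by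
    have h1 : (0 : R) = ∑ i ∈ Finset.univ.filter (fun i => e i = 0),
        B.counit (x i) • y i := by
      calc (0 : R) = B.proj 0 r := hproj0.symm
        _ = ∑ i, B.counit (x i) • B.proj 0 (y i) := by
            rw [← hcc, map_sum]; exact Finset.sum_congr rfl fun i _ => map_smul _ _ _
        _ = ∑ i ∈ Finset.univ.filter (fun i => e i = 0), B.counit (x i) • y i := by
            rw [Finset.sum_filter]
            refine Finset.sum_congr rfl fun i _ => ?_
            by_cases hei : e i = 0
            · rw [if_pos hei, B.proj_same (hei ▸ (hc i).2.2)]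
            · rw [if_neg hei, B.proj_ne (hc i).2.2 hei, smul_zero]
    calc ∑ i ∈ Finset.univ.filter (fun i => e i = 0), B.counit (x i) * B.counit (y i)
        = ∑ i ∈ Finset.univ.filter (fun i => e i = 0),
            B.counit (B.counit (x i) • y i) :=
          Finset.sum_congr rfl fun i _ => by rw [map_smul, smul_eq_mul]
      _ = B.counit 0 := by rw [← map_sum, ← h1]
      _ = 0 := map_zero _
  have hB : ∑ i ∈ Finset.univ.filter (fun i => d i = 0),
      B.counit (x i) * B.counit (y i) = 0 := by
    have h1 : (0 : R) = ∑ i ∈ Finset.univ.filter (fun i => d i = 0),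
        B.counit (y i) • x i := by
      calc (0 : R) = B.proj 0 r := hproj0.symm
        _ = ∑ i, B.counit (y i) • B.proj 0 (x i) := by
            rw [← hc2, map_sum]; exact Finset.sum_congr rfl fun i _ => map_smul _ _ _
        _ = ∑ i ∈ Finset.univ.filter (fun i => d i = 0), B.counit (y i) • x i := by
            rw [Finset.sum_filter]
            refine Finset.sum_congr rfl fun i _ => ?_
            by_cases hdi : d i = 0
            · rw [if_pos hdi, B.proj_same (hdi ▸ (hc i).2.1)]
            · rw [if_neg hdi, B.proj_ne (hc i).2.1 hdi, smul_zero]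
    calc ∑ i ∈ Finset.univ.filter (fun i => d i = 0), B.counit (x i) * B.counit (y i)
        = ∑ i ∈ Finset.univ.filter (fun i => d i = 0),
            B.counit (B.counit (y i) • x i) :=
          Finset.sum_congr rfl fun i _ => by rw [map_smul, smul_eq_mul, mul_comm]
      _ = B.counit 0 := by rw [← map_sum, ← h1]
      _ = 0 := map_zero _
  have htot : B.counit r = ∑ i, B.counit (x i) * B.counit (y i) := by
    rw [← hcc, map_sum]
    exact Finset.sum_congr rfl fun i _ => by rw [map_smul, smul_eq_mul]
  have hmid : ∑ i ∈ Finset.univ.filter (fun i => ¬ e i = 0),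
      B.counit (x i) * B.counit (y i)
      = ∑ i ∈ Finset.univ.filter (fun i => d i = 0),
        B.counit (x i) * B.counit (y i) := by
    rw [Finset.sum_filter, Finset.sum_filter]
    refine Finset.sum_congr rfl fun i _ => ?_
    by_cases hdi : d i = 0
    · have hei : ¬ e i = 0 := by have := (hc i).1; omega
      rw [if_pos hei, if_pos hdi]
    · by_cases hei : e i = 0
      · rw [if_neg (not_not_intro hei), if_neg hdi]
      · have hlt : d i < n := by have := (hc i).1; omega
        rw [if_pos hei, if_neg hdi, IH (d i) hlt hdi (x i) (hc i).2.1, zero_mul]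
  rw [htot, ← Finset.sum_filter_add_sum_filter_not Finset.univ (fun i => e i = 0), hA,
    hmid, hB, zero_add]

/-- The tower of "monomial" submodules of a pre-Nichols algebra. -/
def QQ (B : BGH k J D R) : ℕ → Submodule k R
  | 0 => Submodule.span k {(1 : R)}
  | (n + 1) => Submodule.span k (Set.image2 (· * ·) (B.grade 1 : Set R) (B.QQ n : Set R))

theorem QQ_le_grade (B : BGH k J D R) : ∀ n, B.QQ n ≤ B.grade n
  | 0 => by
    rw [show B.QQ 0 = Submodule.span k {(1 : R)} from rfl, ← B.grade0]
  | (n + 1) => by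
    rw [show B.QQ (n + 1)
      = Submodule.span k (Set.image2 (· * ·) (B.grade 1 : Set R) (B.QQ n : Set R)) from rfl,
      Submodule.span_le]
    rintro _ ⟨w, hw, y, hy, rfl⟩
    have h := B.mul_grade hw (B.QQ_le_grade n hy)
    rw [Nat.add_comm] at h
    exact h

theorem mul_QQ (B : BGH k J D R) :
    ∀ m n (x y : R), x ∈ B.QQ m → y ∈ B.QQ n → x * y ∈ B.QQ (m + n) := by
  intro m
  induction m with
  | zero =>
    intro n x y hx hy
    obtain ⟨c, rfl⟩ := Submodule.mem_span_singleton.1 hx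
    rw [smul_mul_assoc, one_mul, Nat.zero_add]
    exact Submodule.smul_mem _ _ hy
  | succ m IH =>
    intro n x y hx hy
    have hxmem : x ∈ (B.QQ (m + 1 + n)).comap (LinearMap.mulRight k y) := by
      refine Submodule.span_le.2 ?_ hx
      rintro _ ⟨w, hw, z, hz, rfl⟩
      simp only [SetLike.mem_coe, Submodule.mem_comap, LinearMap.mulRight_apply]
      rw [mul_assoc]
      have h1 : z * y ∈ B.QQ (m + n) := IH n z y hz hy
      have h2 : w * (z * y) ∈ B.QQ (m + n + 1) :=
        Submodule.subset_span (Set.mem_image2_of_mem hw h1)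
      have : m + n + 1 = m + 1 + n := by omega
      rw [← this]
      exact h2
    simpa using hxmem

theorem grade_le_QQ (B : BGH k J D R) (hpre : B.IsPreNichols k) (n : ℕ) :
    B.grade n ≤ B.QQ n := by
  intro x hx
  have htop : ∀ z : R, z ∈ ⨆ m, B.QQ m := by
    intro z
    have hz : z ∈ Subalgebra.toSubmodule (Algebra.adjoin k (B.grade 1 : Set R)) := by
      rw [hpre]; trivial
    rw [Algebra.adjoin_eq_span] at hz
    refine Submodule.span_le.2 ?_ hz
    intro w hw
    have hex : ∃ n, w ∈ B.QQ n := by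
      refine Submonoid.closure_induction (fun u hu => ⟨1, ?_⟩)
        ⟨0, Submodule.subset_span rfl⟩
        (fun u v _ _ hu hv => ?_) hw
      · exact Submodule.subset_span ⟨u, hu, 1, Submodule.subset_span rfl, mul_one u⟩
      · obtain ⟨a, ha⟩ := hu
        obtain ⟨b, hb⟩ := hv
        exact ⟨a + b, B.mul_QQ a b u v ha hb⟩
    obtain ⟨n', hn'⟩ := hex
    exact (le_iSup B.QQ n') hn'
  have hx2 : x ∈ (B.QQ n).comap (B.proj n) := by
    have hsup : (⨆ m, B.QQ m) ≤ (B.QQ n).comap (B.proj n) := by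
      refine iSup_le fun m => ?_
      intro z hz
      simp only [Submodule.mem_comap]
      by_cases hmn : m = n
      · subst hmn
        rw [B.proj_same (B.QQ_le_grade m hz)]
        exact hz
      · rw [B.proj_ne (B.QQ_le_grade m hz) hmn]
        exact Submodule.zero_mem _
    exact hsup (htop x)
  have h3 := Submodule.mem_comap.1 hx2
  rw [B.proj_same hx] at h3
  exact h3

theorem proj_top_sum (B : BGH k J D R) {n : ℕ} {r : R} (hr : r ∈ B.grade n) {p : ℕ}
    {d e : Fin p → ℕ} {r1 r2 : Fin p → R}
    (hc : ∀ i, d i + e i = n ∧ r1 i ∈ B.grade (d i) ∧ r2 i ∈ B.grade (e i))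
    (hD : B.comul r = ∑ i, r1 i ⊗ₜ[k] r2 i) :
    ∑ i ∈ Finset.univ.filter (fun i => d i = n), B.counit (r2 i) • r1 i = r := by
  have hsum1 : ∑ i, B.counit (r2 i) • r1 i = r := B.comul_counit_rep hD
  calc ∑ i ∈ Finset.univ.filter (fun i => d i = n), B.counit (r2 i) • r1 i
      = ∑ i, B.counit (r2 i) • B.proj n (r1 i) := by
        rw [Finset.sum_filter]
        refine Finset.sum_congr rfl fun i _ => ?_
        by_cases hdi : d i = n
        · rw [if_pos hdi, B.proj_same (hdi ▸ (hc i).2.1)]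
        · rw [if_neg hdi, B.proj_ne (hc i).2.1 hdi, smul_zero]
    _ = B.proj n (∑ i, B.counit (r2 i) • r1 i) := by
        rw [map_sum]
        exact Finset.sum_congr rfl fun i _ => (map_smul _ _ _).symm
    _ = r := by rw [hsum1, B.proj_same hr]

theorem proj_bot_sum (B : BGH k J D R) {n : ℕ} {r : R} (hr : r ∈ B.grade n) {p : ℕ}
    {d e : Fin p → ℕ} {r1 r2 : Fin p → R}
    (hc : ∀ i, d i + e i = n ∧ r1 i ∈ B.grade (d i) ∧ r2 i ∈ B.grade (e i))
    (hD : B.comul r = ∑ i, r1 i ⊗ₜ[k] r2 i) :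
    ∑ i ∈ Finset.univ.filter (fun i => e i = n), B.counit (r1 i) • r2 i = r := by
  have hsum1 : ∑ i, B.counit (r1 i) • r2 i = r := B.counit_comul_rep hD
  calc ∑ i ∈ Finset.univ.filter (fun i => e i = n), B.counit (r1 i) • r2 i
      = ∑ i, B.counit (r1 i) • B.proj n (r2 i) := by
        rw [Finset.sum_filter]
        refine Finset.sum_congr rfl fun i _ => ?_
        by_cases hei : e i = n
        · rw [if_pos hei, B.proj_same (hei ▸ (hc i).2.2)]
        · rw [if_neg hei, B.proj_ne (hc i).2.2 hei, smul_zero]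
    _ = B.proj n (∑ i, B.counit (r1 i) • r2 i) := by
        rw [map_sum]
        exact Finset.sum_congr rfl fun i _ => (map_smul _ _ _).symm
    _ = r := by rw [hsum1, B.proj_same hr]

theorem full_rep (B : BGH k J D R) (r : R) :
    ∃ (p : ℕ) (r1 r2 : Fin p → R) (q : ℕ) (rJ : Fin p → Fin q → J) (rV : Fin p → Fin q → R),
      B.comul r = ∑ i, r1 i ⊗ₜ[k] r2 i ∧
      ∀ i, B.coact (r2 i) = ∑ j, rJ i j ⊗ₜ[k] rV i j := by
  obtain ⟨p, r1, r2, h1⟩ := aux_exists_fin_rep (B.comul r)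
  obtain ⟨q, rJ, rV, _, h2⟩ := aux_exists_uniform_rep (fun i => B.coact (r2 i))
    (fun _ => (⊤ : Submodule k R)) (fun i => by
      obtain ⟨q0, f, g, h⟩ := aux_exists_fin_rep (B.coact (r2 i))
      exact ⟨q0, f, g, fun j => trivial, h⟩)
  exact ⟨p, r1, r2, q, rJ, rV, h1, h2⟩

theorem graded_rep (B : BGH k J D R) {n : ℕ} {r : R} (hr : r ∈ B.grade n) :
    ∃ (p : ℕ) (d e : Fin p → ℕ) (r1 r2 : Fin p → R) (q : ℕ)
      (rJ : Fin p → Fin q → J) (rV : Fin p → Fin q → R),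
      (∀ i, d i + e i = n ∧ r1 i ∈ B.grade (d i) ∧ r2 i ∈ B.grade (e i)) ∧
      B.comul r = ∑ i, r1 i ⊗ₜ[k] r2 i ∧
      (∀ i, B.coact (r2 i) = ∑ j, rJ i j ⊗ₜ[k] rV i j) ∧
      (∀ i j, rV i j ∈ B.grade (e i)) := by
  obtain ⟨p, d, e, r1, r2, hc, hD⟩ := B.comul_grade r hr
  obtain ⟨q, rJ, rV, hgr, hco⟩ := aux_exists_uniform_rep (fun i => B.coact (r2 i))
    (fun i => B.grade (e i)) (fun i => by
      obtain ⟨q0, f, g, hg, h⟩ := B.coact_grade (r2 i) (hc i).2.2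
      exact ⟨q0, f, g, hg, h⟩)
  exact ⟨p, d, e, r1, r2, q, rJ, rV, hc, hD, hco, hgr⟩

theorem grade0_eq (B : BGH k J D R) {z : R} (hz : z ∈ B.grade 0) :
    z = B.counit z • 1 := by
  rw [B.grade0] at hz
  obtain ⟨c, rfl⟩ := Submodule.mem_span_singleton.1 hz
  rw [map_smul, B.counit_one, smul_eq_mul, mul_one]

end BGH

end GradedInfra


section Pairing

variable {k : Type} [Field k]
variable {J : Type} [Ring J] [Algebra k J] {R : Type} [Ring R] [Algebra k R]
variable {K S : Type} [Ring K] [Algebra k K] [Ring S] [Algebra k S]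

/-! ### Multiplication formulas in the bosonizations -/

theorem Amul_rr (St : Setup k J K R S) (r r' : R) :
    St.A.Amul (r ⊗ₜ[k] (1 : J)) (r' ⊗ₜ[k] (1 : J)) = (r * r') ⊗ₜ[k] (1 : J) := by
  have h := St.A.Amul_def r r' 1 1 1 (fun _ => (1 : J)) (fun _ => (1 : J))
    (by rw [St.DJ.comul_one, Fin.sum_univ_one])
  rw [h, Fin.sum_univ_one, St.RB.act_one, one_mul]

theorem Amul_rJ (St : Setup k J K R S) (r : R) (a : J) :
    St.A.Amul (r ⊗ₜ[k] (1 : J)) ((1 : R) ⊗ₜ[k] a) = r ⊗ₜ[k] a := by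
  have h := St.A.Amul_def r 1 1 a 1 (fun _ => (1 : J)) (fun _ => (1 : J))
    (by rw [St.DJ.comul_one, Fin.sum_univ_one])
  rw [h, Fin.sum_univ_one, St.RB.act_one, mul_one, one_mul]

theorem Hmul_ss (St : Setup k J K R S) (s s' : S) :
    St.H.Amul (s ⊗ₜ[k] (1 : K)) (s' ⊗ₜ[k] (1 : K)) = (s * s') ⊗ₜ[k] (1 : K) := by
  have h := St.H.Amul_def s s' 1 1 1 (fun _ => (1 : K)) (fun _ => (1 : K))
    (by rw [St.DK.comul_one, Fin.sum_univ_one])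
  rw [h, Fin.sum_univ_one, St.SB.act_one, one_mul]

theorem Hmul_sK (St : Setup k J K R S) (s : S) (x : K) :
    St.H.Amul (s ⊗ₜ[k] (1 : K)) ((1 : S) ⊗ₜ[k] x) = s ⊗ₜ[k] x := by
  have h := St.H.Amul_def s 1 1 x 1 (fun _ => (1 : K)) (fun _ => (1 : K))
    (by rw [St.DK.comul_one, Fin.sum_univ_one])
  rw [h, Fin.sum_univ_one, St.SB.act_one, mul_one, one_mul]

/-! ### Comultiplication formulas in the bosonizations -/

theorem Acomul_J (St : Setup k J K R S) (a : J) {u : ℕ} {a1 a2 : Fin u → J}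
    (h : St.DJ.comul a = ∑ t, a1 t ⊗ₜ[k] a2 t) :
    St.A.Acomul ((1 : R) ⊗ₜ[k] a)
      = ∑ t, ((1 : R) ⊗ₜ[k] a1 t) ⊗ₜ[k] ((1 : R) ⊗ₜ[k] a2 t) := by
  have h2 := St.A.Acomul_def 1 a 1 1 u (fun _ => (1 : R)) (fun _ => (1 : R))
    (fun _ _ => (1 : J)) (fun _ _ => (1 : R)) a1 a2
    (by rw [St.RB.comul_one, Fin.sum_univ_one])
    (fun i => by rw [Fin.sum_univ_one]; exact St.RB.coact_one)
    h
  rw [h2, Fin.sum_univ_one, Fin.sum_univ_one]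
  exact Finset.sum_congr rfl fun t _ => by rw [one_mul]

theorem Hcomul_K (St : Setup k J K R S) (x : K) {u : ℕ} {x1 x2 : Fin u → K}
    (h : St.DK.comul x = ∑ t, x1 t ⊗ₜ[k] x2 t) :
    St.H.Acomul ((1 : S) ⊗ₜ[k] x)
      = ∑ t, ((1 : S) ⊗ₜ[k] x1 t) ⊗ₜ[k] ((1 : S) ⊗ₜ[k] x2 t) := by
  have h2 := St.H.Acomul_def 1 x 1 1 u (fun _ => (1 : S)) (fun _ => (1 : S))
    (fun _ _ => (1 : K)) (fun _ _ => (1 : S)) x1 x2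
    (by rw [St.SB.comul_one, Fin.sum_univ_one])
    (fun i => by rw [Fin.sum_univ_one]; exact St.SB.coact_one)
    h
  rw [h2, Fin.sum_univ_one, Fin.sum_univ_one]
  exact Finset.sum_congr rfl fun t _ => by rw [one_mul]

theorem Acomul_R (St : Setup k J K R S) (r : R) {p : ℕ} {r1 r2 : Fin p → R} {q : ℕ}
    {rJ : Fin p → Fin q → J} {rV : Fin p → Fin q → R}
    (h1 : St.RB.comul r = ∑ i, r1 i ⊗ₜ[k] r2 i)
    (h2 : ∀ i, St.RB.coact (r2 i) = ∑ j, rJ i j ⊗ₜ[k] rV i j) :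
    St.A.Acomul (r ⊗ₜ[k] (1 : J))
      = ∑ l : Fin (p * q), fl2 p q (fun i j => r1 i ⊗ₜ[k] rJ i j) l
          ⊗ₜ[k] fl2 p q (fun i j => rV i j ⊗ₜ[k] (1 : J)) l := by
  have h3 := St.A.Acomul_def r 1 p q 1 r1 r2 rJ rV (fun _ => (1 : J)) (fun _ => (1 : J)) h1 h2
    (by rw [St.DJ.comul_one, Fin.sum_univ_one])
  rw [h3]
  have h4 : ∀ i j, (∑ t : Fin 1, (r1 i ⊗ₜ[k] (rJ i j * 1)) ⊗ₜ[k] (rV i j ⊗ₜ[k] (1 : J)))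
      = (r1 i ⊗ₜ[k] rJ i j) ⊗ₜ[k] (rV i j ⊗ₜ[k] (1 : J)) := fun i j => by
    rw [Fin.sum_univ_one, mul_one]
  rw [Finset.sum_congr rfl (fun i _ => Finset.sum_congr rfl (fun j _ => h4 i j)),
    ← sum_fl2 p q (fun i j => (r1 i ⊗ₜ[k] rJ i j) ⊗ₜ[k] (rV i j ⊗ₜ[k] (1 : J)))]
  rfl

theorem Hcomul_S (St : Setup k J K R S) (s : S) {p : ℕ} {s1 s2 : Fin p → S} {q : ℕ}
    {sK : Fin p → Fin q → K} {sW : Fin p → Fin q → S}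
    (h1 : St.SB.comul s = ∑ i, s1 i ⊗ₜ[k] s2 i)
    (h2 : ∀ i, St.SB.coact (s2 i) = ∑ j, sK i j ⊗ₜ[k] sW i j) :
    St.H.Acomul (s ⊗ₜ[k] (1 : K))
      = ∑ l : Fin (p * q), fl2 p q (fun i j => s1 i ⊗ₜ[k] sK i j) l
          ⊗ₜ[k] fl2 p q (fun i j => sW i j ⊗ₜ[k] (1 : K)) l := by
  have h3 := St.H.Acomul_def s 1 p q 1 s1 s2 sK sW (fun _ => (1 : K)) (fun _ => (1 : K)) h1 h2
    (by rw [St.DK.comul_one, Fin.sum_univ_one])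
  rw [h3]
  have h4 : ∀ i j, (∑ t : Fin 1, (s1 i ⊗ₜ[k] (sK i j * 1)) ⊗ₜ[k] (sW i j ⊗ₜ[k] (1 : K)))
      = (s1 i ⊗ₜ[k] sK i j) ⊗ₜ[k] (sW i j ⊗ₜ[k] (1 : K)) := fun i j => by
    rw [Fin.sum_univ_one, mul_one]
  rw [Finset.sum_congr rfl (fun i _ => Finset.sum_congr rfl (fun j _ => h4 i j)),
    ← sum_fl2 p q (fun i j => (s1 i ⊗ₜ[k] sK i j) ⊗ₜ[k] (sW i j ⊗ₜ[k] (1 : K)))]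
  rfl

/-! ### Basic evaluations of `τ` -/

theorem tauRS_apply (St : Setup k J K R S) (r : R) (s : S) :
    St.tauRS r s = St.τ (r ⊗ₜ[k] (1 : J)) (s ⊗ₜ[k] (1 : K)) := rfl

theorem tau_r1_11 (St : Setup k J K R S) (r : R) :
    St.τ (r ⊗ₜ[k] (1 : J)) ((1 : S) ⊗ₜ[k] (1 : K)) = St.RB.counit r := by
  rw [St.τ_one_right, St.A.Acounit_def, St.DJ.counit_one, mul_one]

theorem tau_11_s1 (St : Setup k J K R S) (s : S) :
    St.τ ((1 : R) ⊗ₜ[k] (1 : J)) (s ⊗ₜ[k] (1 : K)) = St.SB.counit s := by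
  rw [St.τ_one_left, St.H.Acounit_def, St.DK.counit_one, mul_one]

theorem tau_sum_left (St : Setup k J K R S) {ι : Type} (t : Finset ι) (c : ι → k)
    (v : ι → R) (z : S ⊗[k] K) :
    St.τ ((∑ j ∈ t, c j • v j) ⊗ₜ[k] (1 : J)) z
      = ∑ j ∈ t, c j * St.τ (v j ⊗ₜ[k] (1 : J)) z := by
  rw [TensorProduct.sum_tmul, map_sum, LinearMap.sum_apply]
  exact Finset.sum_congr rfl fun j _ => by
    rw [← smul_tmul', map_smul, LinearMap.smul_apply, smul_eq_mul]

/-- `τ(1 ⊗ a, s ⊗ 1) = ε(a) ε(s)`. -/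
theorem tau_Ja_s1 (St : Setup k J K R S) (a : J) (s : S) :
    St.τ ((1 : R) ⊗ₜ[k] a) (s ⊗ₜ[k] (1 : K)) = St.DJ.counit a * St.SB.counit s := by
  set f : S →ₗ[k] k :=
    (St.τ ((1 : R) ⊗ₜ[k] a)).comp (incl₁ k) - (St.DJ.counit a) • St.SB.counit with hf
  have key : ∀ n, St.SB.grade n ≤ LinearMap.ker f := by
    intro n
    match n with
    | 0 =>
      rw [St.SB.grade0, Submodule.span_le, Set.singleton_subset_iff]
      simp only [SetLike.mem_coe, LinearMap.mem_ker, hf, LinearMap.sub_apply,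
        LinearMap.comp_apply, LinearMap.smul_apply, smul_eq_mul]
      have : (incl₁ k : S →ₗ[k] S ⊗[k] K) 1 = (1 : S) ⊗ₜ[k] (1 : K) := rfl
      rw [this, St.τ_ext, St.τ₀_one_right, St.SB.counit_one, mul_one, sub_self]
    | (n + 1) =>
      refine le_trans (St.SB.grade_le_QQ St.SB_pre (n + 1)) ?_
      rw [show St.SB.QQ (n + 1)
        = Submodule.span k (Set.image2 (· * ·) (St.SB.grade 1 : Set S)
            (St.SB.QQ n : Set S)) from rfl, Submodule.span_le]
      rintro _ ⟨w, hw, y, hy, rfl⟩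
      simp only [SetLike.mem_coe, LinearMap.mem_ker, hf, LinearMap.sub_apply,
        LinearMap.comp_apply, LinearMap.smul_apply, smul_eq_mul]
      have hwy : (incl₁ k : S →ₗ[k] S ⊗[k] K) (w * y) = (w * y) ⊗ₜ[k] (1 : K) := rfl
      rw [hwy]
      obtain ⟨u, a1, a2, ha⟩ := aux_exists_fin_rep (St.DJ.comul a)
      have hm := St.τ_mul_right ((1 : R) ⊗ₜ[k] a) (w ⊗ₜ[k] (1 : K)) (y ⊗ₜ[k] (1 : K)) u
        _ _ (Acomul_J St a ha)
      rw [Hmul_ss] at hm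
      rw [hm, Finset.sum_eq_zero (fun t _ => by rw [St.τ_JW (a2 t) w hw, mul_zero]),
        St.SB.counit_mul, St.SB.counit_grade 1 one_ne_zero w hw, zero_mul, mul_zero,
        sub_zero]
  have hs : s ∈ LinearMap.ker f := by
    have htop : (⊤ : Submodule k S) ≤ LinearMap.ker f := by
      rw [← St.SB.internal.submodule_iSup_eq_top]
      exact iSup_le key
    exact htop trivial
  have h2 := LinearMap.mem_ker.1 hs
  rw [hf, LinearMap.sub_apply, LinearMap.comp_apply, LinearMap.smul_apply,
    smul_eq_mul, sub_eq_zero] at h2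
  exact h2

/-- `τ(r ⊗ 1, 1 ⊗ x) = ε(r) ε(x)`. -/
theorem tau_r1_Kx (St : Setup k J K R S) (r : R) (x : K) :
    St.τ (r ⊗ₜ[k] (1 : J)) ((1 : S) ⊗ₜ[k] x) = St.RB.counit r * St.DK.counit x := by
  set f : R →ₗ[k] k :=
    ((St.τ.flip ((1 : S) ⊗ₜ[k] x)).comp (incl₁ k)) - (St.DK.counit x) • St.RB.counit with hf
  have key : ∀ n, St.RB.grade n ≤ LinearMap.ker f := by
    intro n
    match n with
    | 0 =>
      rw [St.RB.grade0, Submodule.span_le, Set.singleton_subset_iff]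
      simp only [SetLike.mem_coe, LinearMap.mem_ker, hf, LinearMap.sub_apply,
        LinearMap.comp_apply, LinearMap.smul_apply, smul_eq_mul, LinearMap.flip_apply]
      have : (incl₁ k : R →ₗ[k] R ⊗[k] J) 1 = (1 : R) ⊗ₜ[k] (1 : J) := rfl
      rw [this, St.τ_ext, St.τ₀_one_left, St.RB.counit_one, mul_one, sub_self]
    | (n + 1) =>
      refine le_trans (St.RB.grade_le_QQ St.RB_pre (n + 1)) ?_
      rw [show St.RB.QQ (n + 1)
        = Submodule.span k (Set.image2 (· * ·) (St.RB.grade 1 : Set R)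
            (St.RB.QQ n : Set R)) from rfl, Submodule.span_le]
      rintro _ ⟨v, hv, z, hz, rfl⟩
      simp only [SetLike.mem_coe, LinearMap.mem_ker, hf, LinearMap.sub_apply,
        LinearMap.comp_apply, LinearMap.smul_apply, smul_eq_mul, LinearMap.flip_apply]
      have hvz : (incl₁ k : R →ₗ[k] R ⊗[k] J) (v * z) = (v * z) ⊗ₜ[k] (1 : J) := rfl
      rw [hvz]
      obtain ⟨u, x1, x2, hx⟩ := aux_exists_fin_rep (St.DK.comul x)
      have hm := St.τ_mul_left (v ⊗ₜ[k] (1 : J)) (z ⊗ₜ[k] (1 : J)) ((1 : S) ⊗ₜ[k] x) u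
        _ _ (Hcomul_K St x hx)
      rw [Amul_rr] at hm
      rw [hm, Finset.sum_eq_zero (fun t _ => by rw [St.τ_VK v (x1 t) hv, zero_mul]),
        St.RB.counit_mul, St.RB.counit_grade 1 one_ne_zero v hv, zero_mul, mul_zero,
        sub_zero]
  have hs : r ∈ LinearMap.ker f := by
    have htop : (⊤ : Submodule k R) ≤ LinearMap.ker f := by
      rw [← St.RB.internal.submodule_iSup_eq_top]
      exact iSup_le key
    exact htop trivial
  have h2 := LinearMap.mem_ker.1 hs
  rw [hf, LinearMap.sub_apply, LinearMap.comp_apply, LinearMap.smul_apply,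
    smul_eq_mul, sub_eq_zero, LinearMap.flip_apply] at h2
  exact h2.trans (mul_comm _ _)

/-- `τ(r ⊗ a, 1 ⊗ x) = ε(r) τ₀(a, x)`. -/
theorem tau_ra_Kx (St : Setup k J K R S) (r : R) (a : J) (x : K) :
    St.τ (r ⊗ₜ[k] a) ((1 : S) ⊗ₜ[k] x) = St.RB.counit r * St.τ₀ a x := by
  obtain ⟨u, x1, x2, hx⟩ := aux_exists_fin_rep (St.DK.comul x)
  have hm := St.τ_mul_left (r ⊗ₜ[k] (1 : J)) ((1 : R) ⊗ₜ[k] a) ((1 : S) ⊗ₜ[k] x) u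
    _ _ (Hcomul_K St x hx)
  rw [Amul_rJ] at hm
  rw [hm]
  have hsum : ∑ t, St.DK.counit (x1 t) • x2 t = x := by
    have h2 := St.DK.counit_comul x
    rw [hx, lid_rTensor_sum] at h2
    exact h2
  calc ∑ t, St.τ (r ⊗ₜ[k] (1 : J)) ((1 : S) ⊗ₜ[k] x1 t)
        * St.τ ((1 : R) ⊗ₜ[k] a) ((1 : S) ⊗ₜ[k] x2 t)
      = ∑ t, St.RB.counit r * (St.DK.counit (x1 t) * St.τ₀ a (x2 t)) := by
        refine Finset.sum_congr rfl fun t _ => ?_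
        rw [tau_r1_Kx, St.τ_ext, mul_assoc]
    _ = St.RB.counit r * St.τ₀ a (∑ t, St.DK.counit (x1 t) • x2 t) := by
        rw [← Finset.mul_sum]
        congr 1
        rw [map_sum]
        exact Finset.sum_congr rfl fun t _ => by rw [map_smul, smul_eq_mul]
    _ = St.RB.counit r * St.τ₀ a x := by rw [hsum]

/-- `τ(r ⊗ a, s ⊗ 1) = ε(a) τ(r ⊗ 1, s ⊗ 1)`. -/
theorem tau_ra_s1 (St : Setup k J K R S) (r : R) (a : J) (s : S) :
    St.τ (r ⊗ₜ[k] a) (s ⊗ₜ[k] (1 : K))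
      = St.DJ.counit a * St.τ (r ⊗ₜ[k] (1 : J)) (s ⊗ₜ[k] (1 : K)) := by
  obtain ⟨p, s1, s2, q, sK, sW, h1, h2⟩ := St.SB.full_rep s
  have key : ∀ b : J, St.τ (r ⊗ₜ[k] b) (s ⊗ₜ[k] (1 : K))
      = St.DJ.counit b * ∑ l : Fin (p * q),
          St.τ (r ⊗ₜ[k] (1 : J)) (fl2 p q (fun i j => s1 i ⊗ₜ[k] sK i j) l)
            * St.SB.counit (fl2 p q (fun i j => sW i j) l) := by
    intro b
    have hm := St.τ_mul_left (r ⊗ₜ[k] (1 : J)) ((1 : R) ⊗ₜ[k] b) (s ⊗ₜ[k] (1 : K)) (p * q)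
      _ _ (Hcomul_S St s h1 h2)
    rw [Amul_rJ] at hm
    rw [hm, Finset.mul_sum]
    refine Finset.sum_congr rfl fun l _ => ?_
    have h3 : St.τ ((1 : R) ⊗ₜ[k] b) (fl2 p q (fun i j => sW i j ⊗ₜ[k] (1 : K)) l)
        = St.DJ.counit b * St.SB.counit (fl2 p q (fun i j => sW i j) l) :=
      tau_Ja_s1 St b _
    rw [h3]
    ring
  rw [key a, key 1, St.DJ.counit_one, one_mul]

/-- The key multiplicativity property: `τ(r, y' y) = Σ τ(r⁽¹⁾, y) τ(r⁽²⁾, y')`. -/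
theorem T_mul (St : Setup k J K R S) (r : R) (y' y : S) {p : ℕ} {r1 r2 : Fin p → R}
    {q : ℕ} {rJ : Fin p → Fin q → J} {rV : Fin p → Fin q → R}
    (h1 : St.RB.comul r = ∑ i, r1 i ⊗ₜ[k] r2 i)
    (h2 : ∀ i, St.RB.coact (r2 i) = ∑ j, rJ i j ⊗ₜ[k] rV i j) :
    St.τ (r ⊗ₜ[k] (1 : J)) ((y' * y) ⊗ₜ[k] (1 : K))
      = ∑ i, St.τ (r1 i ⊗ₜ[k] (1 : J)) (y ⊗ₜ[k] (1 : K))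
          * St.τ (r2 i ⊗ₜ[k] (1 : J)) (y' ⊗ₜ[k] (1 : K)) := by
  have hm := St.τ_mul_right (r ⊗ₜ[k] (1 : J)) (y' ⊗ₜ[k] (1 : K)) (y ⊗ₜ[k] (1 : K)) (p * q)
    _ _ (Acomul_R St r h1 h2)
  rw [Hmul_ss] at hm
  rw [hm]
  have hflat : (∑ l : Fin (p * q),
      St.τ (fl2 p q (fun i j => r1 i ⊗ₜ[k] rJ i j) l) (y ⊗ₜ[k] (1 : K))
        * St.τ (fl2 p q (fun i j => rV i j ⊗ₜ[k] (1 : J)) l) (y' ⊗ₜ[k] (1 : K)))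
      = ∑ i, ∑ j, St.τ (r1 i ⊗ₜ[k] rJ i j) (y ⊗ₜ[k] (1 : K))
          * St.τ (rV i j ⊗ₜ[k] (1 : J)) (y' ⊗ₜ[k] (1 : K)) :=
    sum_fl2 p q (fun i j => St.τ (r1 i ⊗ₜ[k] rJ i j) (y ⊗ₜ[k] (1 : K))
      * St.τ (rV i j ⊗ₜ[k] (1 : J)) (y' ⊗ₜ[k] (1 : K)))
  rw [hflat]
  refine Finset.sum_congr rfl fun i _ => ?_
  have hcc : ∑ j, St.DJ.counit (rJ i j) • rV i j = r2 i := by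
    have h3 := St.RB.coact_counit (r2 i)
    rw [h2 i, lid_rTensor_sum] at h3
    exact h3
  calc ∑ j, St.τ (r1 i ⊗ₜ[k] rJ i j) (y ⊗ₜ[k] (1 : K))
        * St.τ (rV i j ⊗ₜ[k] (1 : J)) (y' ⊗ₜ[k] (1 : K))
      = St.τ (r1 i ⊗ₜ[k] (1 : J)) (y ⊗ₜ[k] (1 : K))
        * ∑ j, St.DJ.counit (rJ i j)
            * St.τ (rV i j ⊗ₜ[k] (1 : J)) (y' ⊗ₜ[k] (1 : K)) := by
        rw [Finset.mul_sum]
        refine Finset.sum_congr rfl fun j _ => ?_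
        rw [tau_ra_s1]
        ring
    _ = St.τ (r1 i ⊗ₜ[k] (1 : J)) (y ⊗ₜ[k] (1 : K))
        * St.τ (r2 i ⊗ₜ[k] (1 : J)) (y' ⊗ₜ[k] (1 : K)) := by
        congr 1
        rw [← hcc, tau_sum_left]

/-! ### Orthogonality of the graded components -/

theorem orth0 (St : Setup k J K R S) {m : ℕ} (hm : m ≠ 0) {r : R}
    (hr : r ∈ St.RB.grade m) {s : S} (hs : s ∈ St.SB.grade 0) :
    St.τ (r ⊗ₜ[k] (1 : J)) (s ⊗ₜ[k] (1 : K)) = 0 := by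
  rw [St.SB.grade0_eq hs, ← smul_tmul', map_smul, smul_eq_mul, tau_r1_11,
    St.RB.counit_grade m hm r hr, mul_zero]

theorem orth1 (St : Setup k J K R S) {m : ℕ} (hm : m ≠ 1) {r : R}
    (hr : r ∈ St.RB.grade m) {w : S} (hw : w ∈ St.SB.grade 1) :
    St.τ (r ⊗ₜ[k] (1 : J)) (w ⊗ₜ[k] (1 : K)) = 0 := by
  match m, hm with
  | 1, hm => exact absurd rfl hm
  | 0, _ =>
    rw [St.RB.grade0_eq hr, ← smul_tmul', map_smul, LinearMap.smul_apply,
      smul_eq_mul, tau_11_s1, St.SB.counit_grade 1 one_ne_zero w hw, mul_zero]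
  | (m + 2), _ =>
    have hle : St.RB.grade (m + 2) ≤ LinearMap.ker
        ((St.τ.flip (w ⊗ₜ[k] (1 : K))).comp (incl₁ k)) := by
      refine le_trans (St.RB.grade_le_QQ St.RB_pre (m + 2)) ?_
      rw [show St.RB.QQ (m + 2)
        = Submodule.span k (Set.image2 (· * ·) (St.RB.grade 1 : Set R)
            (St.RB.QQ (m + 1) : Set R)) from rfl, Submodule.span_le]
      rintro _ ⟨v, hv, z, hz, rfl⟩
      have hzg : z ∈ St.RB.grade (m + 1) := St.RB.QQ_le_grade (m + 1) hz
      simp only [SetLike.mem_coe, LinearMap.mem_ker, LinearMap.comp_apply,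
        LinearMap.flip_apply]
      have hvz : (incl₁ k : R →ₗ[k] R ⊗[k] J) (v * z) = (v * z) ⊗ₜ[k] (1 : J) := rfl
      rw [hvz]
      obtain ⟨p, d, e, w1, w2, q, wK, wW, hc, hD, hco, hgr⟩ := St.SB.graded_rep hw
      have hterm : ∀ (i : Fin p) (j : Fin q),
          St.τ (v ⊗ₜ[k] (1 : J)) (w1 i ⊗ₜ[k] wK i j)
            * St.τ (z ⊗ₜ[k] (1 : J)) (wW i j ⊗ₜ[k] (1 : K)) = 0 := by
        intro i j
        by_cases hd0 : d i = 0
        · have hw1 : w1 i = St.SB.counit (w1 i) • 1 := St.SB.grade0_eq (hd0 ▸ (hc i).2.1)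
          have h5 : St.τ (v ⊗ₜ[k] (1 : J)) (w1 i ⊗ₜ[k] wK i j) = 0 := by
            rw [hw1, ← smul_tmul', map_smul, smul_eq_mul, tau_r1_Kx,
              St.RB.counit_grade 1 one_ne_zero v hv, zero_mul, mul_zero]
          rw [h5, zero_mul]
        · have he0 : e i = 0 := by have := (hc i).1; omega
          have hwW : wW i j = St.SB.counit (wW i j) • 1 := St.SB.grade0_eq (he0 ▸ hgr i j)
          have h5 : St.τ (z ⊗ₜ[k] (1 : J)) (wW i j ⊗ₜ[k] (1 : K)) = 0 := by
            rw [hwW, ← smul_tmul', map_smul, smul_eq_mul, tau_r1_11,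
              St.RB.counit_grade (m + 1) (Nat.succ_ne_zero m) z hzg, mul_zero]
          rw [h5, mul_zero]
      have hm2 := St.τ_mul_left (v ⊗ₜ[k] (1 : J)) (z ⊗ₜ[k] (1 : J)) (w ⊗ₜ[k] (1 : K)) (p * q)
        _ _ (Hcomul_S St w hD hco)
      rw [Amul_rr] at hm2
      rw [hm2]
      exact Finset.sum_eq_zero fun l _ =>
        hterm (finProdFinEquiv.symm l).1 (finProdFinEquiv.symm l).2
    exact LinearMap.mem_ker.1 (hle hr)

theorem orth (St : Setup k J K R S) :
    ∀ n m : ℕ, m ≠ n → ∀ r ∈ St.RB.grade m, ∀ s ∈ St.SB.grade n,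
      St.τ (r ⊗ₜ[k] (1 : J)) (s ⊗ₜ[k] (1 : K)) = 0 := by
  intro n
  induction n using Nat.strong_induction_on with
  | _ n IH =>
  match n, IH with
  | 0, _ => exact fun m hm r hr s hs => orth0 St hm hr hs
  | 1, _ => exact fun m hm r hr s hs => orth1 St hm hr hs
  | (n + 2), IH =>
    intro m hm r hr s hs
    have hle : St.SB.grade (n + 2) ≤ LinearMap.ker
        ((St.τ (r ⊗ₜ[k] (1 : J))).comp (incl₁ k)) := by
      refine le_trans (St.SB.grade_le_QQ St.SB_pre (n + 2)) ?_
      rw [show St.SB.QQ (n + 2)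
        = Submodule.span k (Set.image2 (· * ·) (St.SB.grade 1 : Set S)
            (St.SB.QQ (n + 1) : Set S)) from rfl, Submodule.span_le]
      rintro _ ⟨w, hw, y, hy, rfl⟩
      have hyg : y ∈ St.SB.grade (n + 1) := St.SB.QQ_le_grade (n + 1) hy
      simp only [SetLike.mem_coe, LinearMap.mem_ker, LinearMap.comp_apply]
      have hwy : (incl₁ k : S →ₗ[k] S ⊗[k] K) (w * y) = (w * y) ⊗ₜ[k] (1 : K) := rfl
      rw [hwy]
      obtain ⟨p, d, e, r1, r2, q, rJ, rV, hc, hD, hco, hgr⟩ := St.RB.graded_rep hr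
      rw [T_mul St r w y hD hco]
      refine Finset.sum_eq_zero fun i _ => ?_
      by_cases hdi : d i = n + 1
      · have hei : e i ≠ 1 := by have := (hc i).1; omega
        rw [IH 1 (by omega) (e i) hei (r2 i) (hc i).2.2 w hw, mul_zero]
      · rw [IH (n + 1) (by omega) (d i) hdi (r1 i) (hc i).2.1 y hyg, zero_mul]
    exact LinearMap.mem_ker.1 (hle hs)

theorem rad_all (St : Setup k J K R S) {n : ℕ} {r : R} (hr : r ∈ St.RB.grade n)
    (h : ∀ s ∈ St.SB.grade n, St.τ (r ⊗ₜ[k] (1 : J)) (s ⊗ₜ[k] (1 : K)) = 0) (s : S) :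
    St.τ (r ⊗ₜ[k] (1 : J)) (s ⊗ₜ[k] (1 : K)) = 0 := by
  obtain ⟨F, hF, _⟩ := St.SB.sum_proj_support s
  have h2 : St.τ (r ⊗ₜ[k] (1 : J)) (s ⊗ₜ[k] (1 : K))
      = ∑ m ∈ F, St.τ (r ⊗ₜ[k] (1 : J)) ((St.SB.proj m s) ⊗ₜ[k] (1 : K)) := by
    conv_lhs => rw [hF]
    rw [TensorProduct.sum_tmul, map_sum]
  rw [h2]
  refine Finset.sum_eq_zero fun m _ => ?_
  by_cases hmn : m = n
  · exact h _ (hmn ▸ St.SB.proj_mem m s)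
  · exact orth St m n (Ne.symm hmn) r hr (St.SB.proj m s) (St.SB.proj_mem m s)

theorem nondeg (St : Setup k J K R S)
    (hinj : ∀ v ∈ St.RB.grade 1, (∀ w ∈ St.SB.grade 1, St.tauRS v w = 0) → v = 0)
    (hN : St.RB.IsNichols k) :
    ∀ n : ℕ, ∀ r ∈ St.RB.grade n,
      (∀ s ∈ St.SB.grade n, St.τ (r ⊗ₜ[k] (1 : J)) (s ⊗ₜ[k] (1 : K)) = 0) → r = 0 := by
  intro n
  induction n using Nat.strong_induction_on with
  | _ n IH =>
  intro r hr hrad0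
  have hrad : ∀ s : S, St.τ (r ⊗ₜ[k] (1 : J)) (s ⊗ₜ[k] (1 : K)) = 0 :=
    rad_all St hr hrad0
  by_cases hn0 : n = 0
  · subst hn0
    have h1 := hrad 1
    rw [tau_r1_11] at h1
    rw [St.RB.grade0_eq hr, h1, zero_smul]
  by_cases hn1 : n = 1
  · subst hn1
    exact hinj r hr (fun w hw => by rw [tauRS_apply]; exact hrad0 w hw)
  obtain ⟨p, d, e, r1, r2, q, rJ, rV, hc, hD, hco, hgr⟩ := St.RB.graded_rep hr
  classical
  -- middle components vanish
  have hPzero : ∀ P, 0 < P → P < n →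
      ∑ i ∈ Finset.univ.filter (fun i => d i = P), r1 i ⊗ₜ[k] r2 i = 0 := by
    intro P hP0 hPn
    have hfilterP : ∀ i, e i = n - P ↔ d i = P := fun i => by
      have := (hc i).1
      constructor <;> intro h <;> omega
    have hcontr : ∀ s'' : S, ∑ i ∈ Finset.univ.filter (fun i => d i = P),
        St.τ (r1 i ⊗ₜ[k] (1 : J)) (s'' ⊗ₜ[k] (1 : K)) • r2 i = 0 := by
      intro s''
      have hprojE : St.RB.proj (n - P)
          (∑ i, St.τ (r1 i ⊗ₜ[k] (1 : J)) (s'' ⊗ₜ[k] (1 : K)) • r2 i)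
          = ∑ i ∈ Finset.univ.filter (fun i => d i = P),
              St.τ (r1 i ⊗ₜ[k] (1 : J)) (s'' ⊗ₜ[k] (1 : K)) • r2 i := by
        rw [map_sum, Finset.sum_filter]
        refine Finset.sum_congr rfl fun i _ => ?_
        rw [map_smul]
        by_cases hdi : d i = P
        · rw [if_pos hdi, St.RB.proj_same (((hfilterP i).2 hdi) ▸ (hc i).2.2)]
        · rw [if_neg hdi, St.RB.proj_ne (hc i).2.2 (fun h => hdi ((hfilterP i).1 h)),
            smul_zero]
      have hTE : ∀ s' ∈ St.SB.grade (n - P),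
          St.τ ((St.RB.proj (n - P)
            (∑ i, St.τ (r1 i ⊗ₜ[k] (1 : J)) (s'' ⊗ₜ[k] (1 : K)) • r2 i)) ⊗ₜ[k] (1 : J))
            (s' ⊗ₜ[k] (1 : K)) = 0 := by
        intro s' hs'
        rw [hprojE, tau_sum_left]
        have hext : ∑ i ∈ Finset.univ.filter (fun i => d i = P),
            St.τ (r1 i ⊗ₜ[k] (1 : J)) (s'' ⊗ₜ[k] (1 : K))
              * St.τ (r2 i ⊗ₜ[k] (1 : J)) (s' ⊗ₜ[k] (1 : K))
            = ∑ i, St.τ (r1 i ⊗ₜ[k] (1 : J)) (s'' ⊗ₜ[k] (1 : K))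
              * St.τ (r2 i ⊗ₜ[k] (1 : J)) (s' ⊗ₜ[k] (1 : K)) := by
          refine Finset.sum_subset (Finset.filter_subset _ _) ?_
          intro i _ hi
          have hdi : ¬ d i = P := by
            intro h
            exact hi (Finset.mem_filter.2 ⟨Finset.mem_univ i, h⟩)
          rw [orth St (n - P) (e i) (fun h => hdi ((hfilterP i).1 h)) (r2 i)
            (hc i).2.2 s' hs', mul_zero]
        rw [hext]
        have hTm := T_mul St r s' s'' hD hco
        rw [hrad (s' * s'')] at hTm
        exact hTm.symm
      have hEP := IH (n - P) (by omega) (St.RB.proj (n - P)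
        (∑ i, St.τ (r1 i ⊗ₜ[k] (1 : J)) (s'' ⊗ₜ[k] (1 : K)) • r2 i))
        (St.RB.proj_mem _ _) hTE
      rw [hprojE] at hEP
      exact hEP
    have hmem1 : ∀ i ∈ Finset.univ.filter (fun i => d i = P), r1 i ∈ St.RB.grade P := by
      intro i hi
      have h4 := (Finset.mem_filter.1 hi).2
      exact h4 ▸ (hc i).2.1
    have hM' : (∑ i ∈ (Finset.univ.filter (fun i => d i = P)).attach,
        (⟨r1 i.1, hmem1 i.1 i.2⟩ : St.RB.grade P) ⊗ₜ[k] r2 i.1) = 0 := by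
      refine aux_tensor_zero_of_contractions
        (St.tauRS.comp (St.RB.grade P).subtype) ?_ _ ?_
      · intro v hv0
        have h2 := IH P (by omega) (v : R) v.2 (fun s hs => by
          have h5 := hv0 s
          rw [LinearMap.comp_apply] at h5
          rw [← tauRS_apply]
          exact h5)
        exact Subtype.ext h2
      · intro s''
        rw [map_sum, map_sum]
        have hcalc : ∀ (i : {x // x ∈ Finset.univ.filter (fun i => d i = P)}),
            (TensorProduct.lid k R) ((LinearMap.rTensor R
              (((St.tauRS.comp (St.RB.grade P).subtype)).flip s''))
              ((⟨r1 i.1, hmem1 i.1 i.2⟩ : St.RB.grade P) ⊗ₜ[k] r2 i.1))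
            = St.τ (r1 i.1 ⊗ₜ[k] (1 : J)) (s'' ⊗ₜ[k] (1 : K)) • r2 i.1 := by
          intro i
          rw [LinearMap.rTensor_tmul, lid_tmul]
          rfl
        rw [Finset.sum_congr rfl (fun i _ => hcalc i),
          Finset.sum_attach (Finset.univ.filter (fun i => d i = P))
            (fun i => St.τ (r1 i ⊗ₜ[k] (1 : J)) (s'' ⊗ₜ[k] (1 : K)) • r2 i)]
        exact hcontr s''
    have h2 := congrArg (LinearMap.rTensor R (St.RB.grade P).subtype) hM'
    rw [map_zero, map_sum] at h2
    have h3 : ∀ (i : {x // x ∈ Finset.univ.filter (fun i => d i = P)}),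
        (LinearMap.rTensor R (St.RB.grade P).subtype)
          ((⟨r1 i.1, hmem1 i.1 i.2⟩ : St.RB.grade P) ⊗ₜ[k] r2 i.1)
        = r1 i.1 ⊗ₜ[k] r2 i.1 := fun i => by rw [LinearMap.rTensor_tmul]; rfl
    rw [Finset.sum_congr rfl (fun i _ => h3 i),
      Finset.sum_attach (Finset.univ.filter (fun i => d i = P))
        (fun i => r1 i ⊗ₜ[k] r2 i)] at h2
    exact h2
  -- top and bottom components
  have hfilter_en : Finset.univ.filter (fun i => e i = 0)
      = Finset.univ.filter (fun i => d i = n) := by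
    refine Finset.filter_congr fun i _ => ?_
    have := (hc i).1
    constructor <;> intro h <;> omega
  have htop : ∑ i ∈ Finset.univ.filter (fun i => e i = 0), r1 i ⊗ₜ[k] r2 i
      = r ⊗ₜ[k] (1 : R) := by
    rw [hfilter_en]
    calc ∑ i ∈ Finset.univ.filter (fun i => d i = n), r1 i ⊗ₜ[k] r2 i
        = ∑ i ∈ Finset.univ.filter (fun i => d i = n),
            (St.RB.counit (r2 i) • r1 i) ⊗ₜ[k] (1 : R) := by
          refine Finset.sum_congr rfl fun i hi => ?_
          have hdi := (Finset.mem_filter.1 hi).2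
          have hei : e i = 0 := by have := (hc i).1; omega
          have h2 : r2 i = St.RB.counit (r2 i) • 1 := St.RB.grade0_eq (hei ▸ (hc i).2.2)
          conv_lhs => rw [h2]
          rw [tmul_smul, smul_tmul']
      _ = (∑ i ∈ Finset.univ.filter (fun i => d i = n),
            St.RB.counit (r2 i) • r1 i) ⊗ₜ[k] (1 : R) := by
          rw [TensorProduct.sum_tmul]
      _ = r ⊗ₜ[k] (1 : R) := by rw [St.RB.proj_top_sum hr hc hD]
  have hfilter_dn : Finset.univ.filter (fun i => d i = 0)
      = Finset.univ.filter (fun i => e i = n) := by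
    refine Finset.filter_congr fun i _ => ?_
    have := (hc i).1
    constructor <;> intro h <;> omega
  have hbot : ∑ i ∈ Finset.univ.filter (fun i => d i = 0), r1 i ⊗ₜ[k] r2 i
      = (1 : R) ⊗ₜ[k] r := by
    rw [hfilter_dn]
    calc ∑ i ∈ Finset.univ.filter (fun i => e i = n), r1 i ⊗ₜ[k] r2 i
        = ∑ i ∈ Finset.univ.filter (fun i => e i = n),
            St.RB.counit (r1 i) • ((1 : R) ⊗ₜ[k] r2 i) := by
          refine Finset.sum_congr rfl fun i hi => ?_
          have hei := (Finset.mem_filter.1 hi).2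
          have hdi : d i = 0 := by have := (hc i).1; omega
          have h2 : r1 i = St.RB.counit (r1 i) • 1 := St.RB.grade0_eq (hdi ▸ (hc i).2.1)
          conv_lhs => rw [h2]
          rw [← smul_tmul']
      _ = (1 : R) ⊗ₜ[k] (∑ i ∈ Finset.univ.filter (fun i => e i = n),
            St.RB.counit (r1 i) • r2 i) := by
          rw [tmul_sum]
          exact Finset.sum_congr rfl fun i _ => (tmul_smul _ _ _).symm
      _ = (1 : R) ⊗ₜ[k] r := by rw [St.RB.proj_bot_sum hr hc hD]
  -- r is primitive
  have hsplit : St.RB.comul r = r ⊗ₜ[k] (1 : R) + (1 : R) ⊗ₜ[k] r := by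
    rw [hD, ← Finset.sum_filter_add_sum_filter_not Finset.univ (fun i => e i = 0)
      (fun i => r1 i ⊗ₜ[k] r2 i), htop]
    congr 1
    rw [← Finset.sum_filter_add_sum_filter_not
      (Finset.univ.filter (fun i => ¬ e i = 0)) (fun i => d i = 0)
      (fun i => r1 i ⊗ₜ[k] r2 i)]
    have hff : (Finset.univ.filter (fun i => ¬ e i = 0)).filter (fun i => d i = 0)
        = Finset.univ.filter (fun i => d i = 0) := by
      rw [Finset.filter_filter]
      refine Finset.filter_congr fun i _ => ?_
      have := (hc i).1
      constructor
      · exact fun h => h.2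
      · intro h
        exact ⟨by omega, h⟩
    have hmidzero : ∑ i ∈ (Finset.univ.filter (fun i => ¬ e i = 0)).filter
        (fun i => ¬ d i = 0), r1 i ⊗ₜ[k] r2 i = 0 := by
      rw [Finset.filter_filter]
      have hmaps : ∀ i ∈ Finset.univ.filter (fun i => ¬ e i = 0 ∧ ¬ d i = 0),
          d i ∈ Finset.Ioo 0 n := by
        intro i hi
        have h4 := (Finset.mem_filter.1 hi).2
        have h5 := (hc i).1
        exact Finset.mem_Ioo.2 ⟨by omega, by omega⟩
      rw [← Finset.sum_fiberwise_of_maps_to hmaps (fun i => r1 i ⊗ₜ[k] r2 i)]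
      refine Finset.sum_eq_zero fun P hP => ?_
      have hP2 := Finset.mem_Ioo.1 hP
      have hfeq : (Finset.univ.filter (fun i => ¬ e i = 0 ∧ ¬ d i = 0)).filter
          (fun i => d i = P) = Finset.univ.filter (fun i => d i = P) := by
        rw [Finset.filter_filter]
        refine Finset.filter_congr fun i _ => ?_
        have := (hc i).1
        constructor
        · exact fun h => h.2
        · intro h
          exact ⟨⟨by omega, by omega⟩, h⟩
      rw [hfeq]
      exact hPzero P hP2.1 hP2.2
    rw [hmidzero, add_zero, hff, hbot]
  have hprim : r ∈ St.RB.primitives k := hsplit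
  have hr1 : r ∈ St.RB.grade 1 := by
    have h5 : r ∈ (St.RB.grade 1 : Set R) := hN.2.symm ▸ hprim
    exact h5
  have h6 := St.RB.proj_ne hr (show n ≠ 1 from hn1)
  rw [St.RB.proj_same hr1] at h6
  exact h6

/-! ### The action of `S` on `R` -/

theorem sAct_rep (St : Setup k J K R S) (s : S) (x : R) {p : ℕ} {x1 x2 : Fin p → R}
    (h : St.RB.comul x = ∑ i, x1 i ⊗ₜ[k] x2 i) :
    St.sAct s x = ∑ i, St.τ (x1 i ⊗ₜ[k] (1 : J)) (s ⊗ₜ[k] (1 : K)) • x2 i := by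
  have h0 : St.sAct s x = (TensorProduct.lid k R)
      ((LinearMap.rTensor R (St.tauRS.flip s)) (St.RB.comul x)) := rfl
  rw [h0, h, lid_rTensor_sum]
  rfl

theorem sAct_one (St : Setup k J K R S) (x : R) : St.sAct 1 x = x := by
  obtain ⟨p, x1, x2, h⟩ := aux_exists_fin_rep (St.RB.comul x)
  rw [sAct_rep St 1 x h,
    Finset.sum_congr rfl (fun i _ => by rw [tau_r1_11 St (x1 i)])]
  exact St.RB.counit_comul_rep h

theorem sAct_lt (St : Setup k J K R S) {n : ℕ} {s : S} (hs : s ∈ St.SB.grade n)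
    {m : ℕ} {x : R} (hx : x ∈ St.RB.grade m) (hmn : m < n) : St.sAct s x = 0 := by
  obtain ⟨p, d, e, x1, x2, hcond, hD⟩ := St.RB.comul_grade x hx
  rw [sAct_rep St s x hD]
  refine Finset.sum_eq_zero fun i _ => ?_
  have hdi : d i ≠ n := by have := (hcond i).1; omega
  rw [orth St n (d i) hdi (x1 i) (hcond i).2.1 s hs, zero_smul]

theorem sAct_top (St : Setup k J K R S) {n : ℕ} {s : S} (hs : s ∈ St.SB.grade n)
    {x : R} (hx : x ∈ St.RB.grade n) :
    St.sAct s x = St.τ (x ⊗ₜ[k] (1 : J)) (s ⊗ₜ[k] (1 : K)) • (1 : R) := by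
  obtain ⟨p, d, e, x1, x2, hcond, hD⟩ := St.RB.comul_grade x hx
  classical
  rw [sAct_rep St s x hD]
  have hsum : ∀ i : Fin p, St.τ (x1 i ⊗ₜ[k] (1 : J)) (s ⊗ₜ[k] (1 : K)) • x2 i
      = (if d i = n then St.τ (x1 i ⊗ₜ[k] (1 : J)) (s ⊗ₜ[k] (1 : K))
          * St.RB.counit (x2 i) else 0) • (1 : R) := by
    intro i
    by_cases hdi : d i = n
    · have hei : e i = 0 := by have := (hcond i).1; omega
      have h2 : x2 i = St.RB.counit (x2 i) • 1 := St.RB.grade0_eq (hei ▸ (hcond i).2.2)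
      rw [if_pos hdi, mul_smul, ← h2]
    · rw [orth St n (d i) hdi (x1 i) (hcond i).2.1 s hs, zero_smul, if_neg hdi, zero_smul]
  rw [Finset.sum_congr rfl (fun i _ => hsum i), ← Finset.sum_smul]
  congr 1
  rw [← Finset.sum_filter]
  calc ∑ i ∈ Finset.univ.filter (fun i => d i = n),
        St.τ (x1 i ⊗ₜ[k] (1 : J)) (s ⊗ₜ[k] (1 : K)) * St.RB.counit (x2 i)
      = ∑ i ∈ Finset.univ.filter (fun i => d i = n),
        St.RB.counit (x2 i) * St.τ (x1 i ⊗ₜ[k] (1 : J)) (s ⊗ₜ[k] (1 : K)) :=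
        Finset.sum_congr rfl fun i _ => mul_comm _ _
    _ = St.τ ((∑ i ∈ Finset.univ.filter (fun i => d i = n),
          St.RB.counit (x2 i) • x1 i) ⊗ₜ[k] (1 : J)) (s ⊗ₜ[k] (1 : K)) := by
        rw [tau_sum_left]
    _ = St.τ (x ⊗ₜ[k] (1 : J)) (s ⊗ₜ[k] (1 : K)) := by
        rw [St.RB.proj_top_sum hx hcond hD]

end Pairing

variable {k : Type} [Field k]
variable {J : Type} [Ring J] [Algebra k J] {R : Type} [Ring R] [Algebra k R]
variable {K S : Type} [Ring K] [Algebra k K] [Ring S] [Algebra k S]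

theorem statement13 (St : Setup k J K R S) [Nontrivial R]
    -- the generalized q-boson algebra ℬ
    (Q : QBosonAlg St)
    -- τ₁^l : V → W* is injective
    (hinj : ∀ v ∈ St.RB.grade 1, (∀ w ∈ St.SB.grade 1, St.tauRS v w = 0) → v = 0)
    -- R is the Nichols algebra of V
    (hN : St.RB.IsNichols k) :
    -- R, regarded as a left ℬ-module via ρ (the Verma module), is simple:
    -- it has no nontrivial ℬ-stable subspaces
    ∀ N : Submodule k R,
      (∀ (r : R) (s : S) (x : R), x ∈ N → r * St.sAct s x ∈ N) →
      N = ⊥ ∨ N = ⊤ := by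
  intro N hclosed
  by_cases hbot : N = ⊥
  · exact Or.inl hbot
  right
  obtain ⟨x, hxN, hx0⟩ := (Submodule.ne_bot_iff N).1 hbot
  obtain ⟨F, hF, hFne⟩ := St.RB.sum_proj_support x
  have hFne' : F.Nonempty := by
    by_contra h
    rw [Finset.not_nonempty_iff_eq_empty] at h
    rw [h, Finset.sum_empty] at hF
    exact hx0 hF
  set n := F.max' hFne' with hn
  have hproj_ne : St.RB.proj n x ≠ 0 := hFne n (F.max'_mem hFne')
  have hex : ∃ s ∈ St.SB.grade n,
      St.τ ((St.RB.proj n x) ⊗ₜ[k] (1 : J)) (s ⊗ₜ[k] (1 : K)) ≠ 0 := by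
    by_contra h
    push_neg at h
    exact hproj_ne (nondeg St hinj hN n _ (St.RB.proj_mem n x) h)
  obtain ⟨s, hs, hτ⟩ := hex
  have hact : St.sAct s x
      = St.τ ((St.RB.proj n x) ⊗ₜ[k] (1 : J)) (s ⊗ₜ[k] (1 : K)) • (1 : R) := by
    have h7 : St.sAct s x = ∑ m ∈ F, St.sAct s (St.RB.proj m x) := by
      conv_lhs => rw [hF]
      rw [map_sum]
    rw [h7, Finset.sum_eq_single n
      (fun m hmF hmn => sAct_lt St hs (St.RB.proj_mem m x)
        (lt_of_le_of_ne (F.le_max' m hmF) hmn))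
      (fun hnn => absurd (F.max'_mem hFne') hnn)]
    exact sAct_top St hs (St.RB.proj_mem n x)
  have h1mem : (1 : R) ∈ N := by
    have hc := hclosed 1 s x hxN
    rw [one_mul, hact] at hc
    have h8 := N.smul_mem
      (St.τ ((St.RB.proj n x) ⊗ₜ[k] (1 : J)) (s ⊗ₜ[k] (1 : K)))⁻¹ hc
    rwa [smul_smul, inv_mul_cancel₀ hτ, one_smul] at h8
  rw [Submodule.eq_top_iff']
  intro y
  have hc := hclosed y 1 1 h1mem
  rwa [sAct_one, mul_one] at hc

end QB
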